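/- Let λ ≠ 0 and F > 0 be real numbers, and let p, q, r, v : ℝ → ℝ be smooth with v(x) ≠ 0 for all x, satisfying (2r − λ)³·F − λ²(2r − λ)(v′)² + 2λ²(2r − λ)v′′v − 4r′λ²·v′v + v²·(λ³ + 2λ²(2p′ − q − 2r) + 4λ(−2p′r + 2r′p + p² + 2qr + r²) − 8r(p² + qr)) = 0 identically on ℝ. Define h := v′/(2v) + √F·(2r − λ)/(2λv). Then h satisfies the Riccati-type equation (h′ + h²)(2r − λ)λ² − 2r′·h·λ² = −(1/4)λ³ + (r + (1/2)q − p′)·λ² + (−r² − 2r′p − 2qr + 2p′r − p²)·λ + 2qr² + 2p²r identically on ℝ. -/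

import Mathlib

theorem riccati_equation_for_h (lam : ℝ) (hlam : lam ≠ 0) (F : ℝ) (hF : 0 < F)
    (p q r v : ℝ → ℝ)
    (hp : ContDiff ℝ (⊤ : ℕ∞) p) (hq : ContDiff ℝ (⊤ : ℕ∞) q)
    (hr : ContDiff ℝ (⊤ : ℕ∞) r) (hv : ContDiff ℝ (⊤ : ℕ∞) v)
    (hvne : ∀ x, v x ≠ 0)
    (heqv : ∀ x : ℝ,
      (2 * r x - lam) ^ 3 * F
        - lam ^ 2 * (2 * r x - lam) * (deriv v x) ^ 2
        + 2 * lam ^ 2 * (2 * r x - lam) * deriv (deriv v) x * v x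
        - 4 * deriv r x * lam ^ 2 * deriv v x * v x
        + (v x) ^ 2 * (lam ^ 3
            + 2 * lam ^ 2 * (2 * deriv p x - q x - 2 * r x)
            + 4 * lam * (-2 * deriv p x * r x + 2 * deriv r x * p x + (p x) ^ 2
                + 2 * q x * r x + (r x) ^ 2)
            - 8 * r x * ((p x) ^ 2 + q x * r x)) = 0)
    (h : ℝ → ℝ)
    (hdef : h = fun x => deriv v x / (2 * v x)
      + Real.sqrt F * (2 * r x - lam) / (2 * lam * v x)) :
    ∀ x : ℝ,
      (deriv h x + h x ^ 2) * (2 * r x - lam) * lam ^ 2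
          - 2 * deriv r x * h x * lam ^ 2 =
        -(1/4) * lam ^ 3 + (r x + (1/2) * q x - deriv p x) * lam ^ 2
          + (-(r x) ^ 2 - 2 * deriv r x * p x - 2 * q x * r x + 2 * deriv p x * r x
              - (p x) ^ 2) * lam
          + 2 * q x * (r x) ^ 2 + 2 * (p x) ^ 2 * r x := by
  intro x
  have hv1 : Differentiable ℝ v := hv.differentiable (by simp)
  have hdvC : ContDiff ℝ (⊤ : ℕ∞) (deriv v) := (contDiff_infty_iff_deriv.mp hv).2
  have hr1 : Differentiable ℝ r := hr.differentiable (by simp)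
  have hva : HasDerivAt v (deriv v x) x := (hv1 x).hasDerivAt
  have hdva : HasDerivAt (deriv v) (deriv (deriv v) x) x :=
    ((hdvC.differentiable (by simp)) x).hasDerivAt
  have hra : HasDerivAt r (deriv r x) x := (hr1 x).hasDerivAt
  set s := Real.sqrt F with hsdef
  have hs : s ^ 2 = F := Real.sq_sqrt hF.le
  have hne1 : (2 : ℝ) * v x ≠ 0 := mul_ne_zero two_ne_zero (hvne x)
  have hne2 : (2 : ℝ) * lam * v x ≠ 0 := mul_ne_zero (mul_ne_zero two_ne_zero hlam) (hvne x)
  have H1 : HasDerivAt (fun x => deriv v x / (2 * v x))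
      ((deriv (deriv v) x * (2 * v x) - deriv v x * (2 * deriv v x)) / (2 * v x) ^ 2) x :=
    hdva.div (hva.const_mul 2) hne1
  have H2 : HasDerivAt (fun x => s * (2 * r x - lam) / (2 * lam * v x))
      ((s * (2 * deriv r x) * (2 * lam * v x) - s * (2 * r x - lam) * (2 * lam * deriv v x))
        / (2 * lam * v x) ^ 2) x :=
    (((hra.const_mul 2).sub_const lam).const_mul s).div (hva.const_mul (2 * lam)) hne2
  have Hh : HasDerivAt h _ x := (show h = (fun x => deriv v x / (2 * v x)) + fun x => s * (2 * r x - lam) / (2 * lam * v x) from hdef) ▸ H1.add H2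
  rw [Hh.deriv, hdef]
  have hE := heqv x
  have hvx := hvne x
  field_simp
  linear_combination (4) * hE
    + (4 * (2 * r x - lam) ^ 3) * hs
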